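/- Let A be a finite set with |A| ≥ 2 and let ρ ⊆ A × A be a partial order on A with a least and a greatest element. Then Pol(ρ) is a maximal clone on A. -/

import Mathlib

/-- An `n`-ary operation on `A`. -/
abbrev Op (A : Type*) (n : ℕ) : Type _ := (Fin n → A) → A

/-- A family of sets of finitary operations is a clone if it contains all projections
and is closed under composition. -/
def IsClone {A : Type*} (C : ∀ n, Set (Op A n)) : Prop :=
  (∀ (n : ℕ) (i : Fin n), (fun v : Fin n → A => v i) ∈ C n) ∧
  (∀ (n k : ℕ) (f : Op A n) (g : Fin n → Op A k),
    f ∈ C n → (∀ i, g i ∈ C k) → (fun v : Fin k → A => f (fun i => g i v)) ∈ C k)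

/-- A clone is maximal if it is proper and any clone containing it is itself or everything. -/
def IsMaximalClone {A : Type*} (C : ∀ n, Set (Op A n)) : Prop :=
  IsClone C ∧ C ≠ (fun _ => Set.univ) ∧
  ∀ D : ∀ n, Set (Op A n), IsClone D → (∀ n, C n ⊆ D n) →
    D = C ∨ D = (fun _ => Set.univ)

/-- An `n`-ary operation preserves an `h`-ary relation `ρ`. -/
def Preserves {A : Type*} {n h : ℕ} (f : Op A n) (ρ : Set (Fin h → A)) : Prop :=
  ∀ r : Fin n → Fin h → A, (∀ i, r i ∈ ρ) → (fun j : Fin h => f (fun i => r i j)) ∈ ρ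

/-- The polymorphism clone of a relation. -/
def Pol {A : Type*} {h : ℕ} (ρ : Set (Fin h → A)) : ∀ n, Set (Op A n) :=
  fun n => {f | Preserves f ρ}

/-- The pair `(a, b)` as a binary tuple. -/
def pair {A : Type*} (a b : A) : Fin 2 → A := ![a, b]

/-- A bounded partial order: a partial order with a least and a greatest element. -/
def IsBoundedPartialOrder {A : Type*} (ρ : Set (Fin 2 → A)) : Prop :=
  (∀ a : A, pair a a ∈ ρ) ∧
  (∀ a b : A, pair a b ∈ ρ → pair b a ∈ ρ → a = b) ∧
  (∀ a b c : A, pair a b ∈ ρ → pair b c ∈ ρ → pair a c ∈ ρ) ∧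
  (∃ z : A, ∀ a : A, pair z a ∈ ρ) ∧
  (∃ o : A, ∀ a : A, pair a o ∈ ρ)

lemma pair_eta {A : Type*} (v : Fin 2 → A) : pair (v 0) (v 1) = v := by
  funext i; fin_cases i <;> simp [pair]

lemma preserves_of_mono {A : Type*} (ρ : Set (Fin 2 → A)) {n : ℕ} (F : Op A n)
    (h : ∀ v w : Fin n → A, (∀ i, pair (v i) (w i) ∈ ρ) → pair (F v) (F w) ∈ ρ) :
    Preserves F ρ := by
  intro r hr
  have h2 := h (fun i => r i 0) (fun i => r i 1) (fun i => by rw [pair_eta]; exact hr i)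
  have he : (fun j : Fin 2 => F (fun i => r i j)) = pair (F fun i => r i 0) (F fun i => r i 1) := by
    funext j; fin_cases j <;> simp [pair]
  rw [he]; exact h2

lemma mono_mem_pol {A : Type*} (ρ : Set (Fin 2 → A)) {n : ℕ} (F : Op A n)
    (h : ∀ v w : Fin n → A, (∀ i, pair (v i) (w i) ∈ ρ) → pair (F v) (F w) ∈ ρ) :
    F ∈ Pol ρ n := preserves_of_mono ρ F h

lemma dense_step {A : Type*} [Fintype A] (ρ : Set (Fin 2 → A)) (z o : A)
    (hrefl : ∀ a : A, pair a a ∈ ρ)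
    (hanti : ∀ a b : A, pair a b ∈ ρ → pair b a ∈ ρ → a = b)
    (htrans : ∀ a b c : A, pair a b ∈ ρ → pair b c ∈ ρ → pair a c ∈ ρ)
    (hz : ∀ a, pair z a ∈ ρ) (ho : ∀ a, pair a o ∈ ρ) (hzo : z ≠ o)
    (D : ∀ n, Set (Op A n)) (hD : IsClone D) (hsub : ∀ n, Pol ρ n ⊆ D n)
    (u1 : Op A 1) (hu1 : u1 ∈ D 1)
    (huz : u1 (fun _ => z) = o) (huo : u1 (fun _ => o) = z)
    (m : ℕ) (F : Op A m) : F ∈ D m := by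
  classical
  have hmon : ∀ {n : ℕ} (G : Op A n),
      (∀ v w : Fin n → A, (∀ i, pair (v i) (w i) ∈ ρ) → pair (G v) (G w) ∈ ρ) → G ∈ D n :=
    fun {n} G h => hsub n (preserves_of_mono ρ G h)
  have hle_z : ∀ a : A, pair a z ∈ ρ → a = z := fun a h => hanti a z h (hz a)
  have hge_o : ∀ a : A, pair o a ∈ ρ → a = o := fun a h => hanti a o (ho a) h
  -- indicator functions of points are in D
  have mem_ind : ∀ a : Fin m → A, (fun v : Fin m → A => if v = a then o else z) ∈ D m := by
    intro a
    have hgeq : (fun v : Fin m → A => if (∀ i, pair (a i) (v i) ∈ ρ) then o else z) ∈ D m := by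
      apply hmon; intro v w h
      by_cases hv : ∀ i, pair (a i) (v i) ∈ ρ
      · have hw : ∀ i, pair (a i) (w i) ∈ ρ := fun i => htrans _ _ _ (hv i) (h i)
        rw [if_pos hv, if_pos hw]; exact hrefl o
      · rw [if_neg hv]; exact hz _
    have hpsi : (fun v : Fin m → A => if (∀ i, pair (v i) (a i) ∈ ρ) then z else o) ∈ D m := by
      apply hmon; intro v w h
      by_cases hw : ∀ i, pair (w i) (a i) ∈ ρ
      · have hv : ∀ i, pair (v i) (a i) ∈ ρ := fun i => htrans _ _ _ (h i) (hw i)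
        rw [if_pos hv, if_pos hw]; exact hrefl z
      · rw [if_neg hw]; exact ho _
    have hpsiu : (fun v : Fin m → A =>
        u1 (fun _ => if (∀ i, pair (v i) (a i) ∈ ρ) then z else o)) ∈ D m :=
      hD.2 1 m u1 (fun _ => fun v : Fin m → A => if (∀ i, pair (v i) (a i) ∈ ρ) then z else o)
        hu1 (fun _ => hpsi)
    have hAND : (fun y : Fin 2 → A => if y 0 = o ∧ y 1 = o then o else z) ∈ D 2 := by
      apply hmon; intro v w h
      by_cases hv : v 0 = o ∧ v 1 = o
      · have h0 := h 0; rw [hv.1] at h0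
        have h1 := h 1; rw [hv.2] at h1
        rw [if_pos hv, if_pos ⟨hge_o _ h0, hge_o _ h1⟩]; exact hrefl o
      · rw [if_neg hv]; exact hz _
    have hcomp := hD.2 2 m (fun y : Fin 2 → A => if y 0 = o ∧ y 1 = o then o else z)
      ![(fun v : Fin m → A => if (∀ i, pair (a i) (v i) ∈ ρ) then o else z),
        (fun v : Fin m → A => u1 (fun _ => if (∀ i, pair (v i) (a i) ∈ ρ) then z else o))]
      hAND
      (by intro j; fin_cases j
          · exact hgeq
          · exact hpsiu)
    have heq : (fun v : Fin m → A =>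
        (fun y : Fin 2 → A => if y 0 = o ∧ y 1 = o then o else z)
          (fun j => ![(fun v : Fin m → A => if (∀ i, pair (a i) (v i) ∈ ρ) then o else z),
            (fun v : Fin m → A => u1 (fun _ => if (∀ i, pair (v i) (a i) ∈ ρ) then z else o))] j v))
        = (fun v : Fin m → A => if v = a then o else z) := by
      funext v
      simp only [Matrix.cons_val_zero, Matrix.cons_val_one, Matrix.head_cons]
      by_cases hva : v = a
      · subst hva
        have e1 : (∀ i, pair (v i) (v i) ∈ ρ) := fun i => hrefl _
        simp only [if_pos e1, huz]
        simp
      · rw [if_neg hva]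
        have hcond : ¬(((if (∀ i, pair (a i) (v i) ∈ ρ) then o else z) = o) ∧
            (u1 (fun _ => if (∀ i, pair (v i) (a i) ∈ ρ) then z else o)) = o) := by
          rintro ⟨h1, h2⟩
          have hga : ∀ i, pair (a i) (v i) ∈ ρ := by
            by_contra hn; rw [if_neg hn] at h1; exact hzo h1
          have hla : ∀ i, pair (v i) (a i) ∈ ρ := by
            by_contra hn; rw [if_neg hn, huo] at h2; exact hzo h2
          exact hva (funext fun i => hanti _ _ (hla i) (hga i))
        exact if_neg hcond
    rw [← heq]; exact hcomp
  -- value indicator then value selector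
  have mem_M : ∀ b : A, (fun v : Fin m → A => if F v = b then b else z) ∈ D m := by
    intro b
    have mem_Db : (fun v : Fin m → A => if F v = b then o else z) ∈ D m := by
      set E := (Fintype.equivFin (Fin m → A)).symm with hE
      have hOR : (fun y : Fin (Fintype.card (Fin m → A)) → A =>
          if (∀ t, y t = z) then z else o) ∈ D (Fintype.card (Fin m → A)) := by
        apply hmon; intro v w h
        by_cases hw : ∀ t, w t = z
        · have hv : ∀ t, v t = z := fun t => hle_z _ (by have := h t; rwa [hw t] at this)
          rw [if_pos hv, if_pos hw]; exact hrefl z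
        · rw [if_neg hw]; exact ho _
      have hcoord : ∀ t : Fin (Fintype.card (Fin m → A)),
          (fun v : Fin m → A => if F (E t) = b then (if v = E t then o else z) else z) ∈ D m := by
        intro t
        by_cases ht : F (E t) = b
        · simp only [if_pos ht]; exact mem_ind (E t)
        · simp only [if_neg ht]; exact hmon _ (fun v w h => hrefl z)
      have hcomp := hD.2 (Fintype.card (Fin m → A)) m
        (fun y : Fin (Fintype.card (Fin m → A)) → A => if (∀ t, y t = z) then z else o)
        (fun t => fun v : Fin m → A => if F (E t) = b then (if v = E t then o else z) else z)
        hOR hcoord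
      have heq : (fun v : Fin m → A =>
          (fun y : Fin (Fintype.card (Fin m → A)) → A => if (∀ t, y t = z) then z else o)
            (fun t => if F (E t) = b then (if v = E t then o else z) else z))
          = (fun v : Fin m → A => if F v = b then o else z) := by
        funext v
        simp only
        by_cases hb : F v = b
        · have hnall : ¬ ∀ t, (if F (E t) = b then (if v = E t then o else z) else z) = z := by
            intro hall
            have h1 := hall (E.symm v)
            rw [Equiv.apply_symm_apply] at h1
            rw [if_pos hb, if_pos rfl] at h1
            exact hzo h1.symm
          rw [if_neg hnall, if_pos hb]
        · have hall : ∀ t, (if F (E t) = b then (if v = E t then o else z) else z) = z := by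
            intro t
            by_cases ht : F (E t) = b
            · rw [if_pos ht]
              have hne : v ≠ E t := fun hv => hb (by rw [hv]; exact ht)
              rw [if_neg hne]
            · rw [if_neg ht]
          rw [if_pos hall, if_neg hb]
      rw [← heq]; exact hcomp
    have hmb : (fun y : Fin 1 → A => if y 0 = o then b else z) ∈ D 1 := by
      apply hmon; intro v w h
      by_cases hv : v 0 = o
      · have h0 := h 0; rw [hv] at h0
        rw [if_pos hv, if_pos (hge_o _ h0)]; exact hrefl b
      · rw [if_neg hv]; exact hz _
    have hcomp := hD.2 1 m (fun y : Fin 1 → A => if y 0 = o then b else z)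
      (fun _ => fun v : Fin m → A => if F v = b then o else z) hmb (fun _ => mem_Db)
    have heq : (fun v : Fin m → A =>
        (fun y : Fin 1 → A => if y 0 = o then b else z)
          (fun _ : Fin 1 => if F v = b then o else z))
        = fun v : Fin m → A => if F v = b then b else z := by
      funext v
      simp only
      by_cases hb : F v = b
      · simp [hb]
      · simp only [if_neg hb, if_neg hzo]
    rw [← heq]; exact hcomp
  -- final assembly with the selector V
  set eA := (Fintype.equivFin A).symm with heA
  have hV : (fun y : Fin (Fintype.card A) → A =>
      if h : ∃ s, y s ≠ z then
        (if ∀ s t, y s ≠ z → y t ≠ z → s = t then y h.choose else o)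
      else z) ∈ D (Fintype.card A) := by
    apply hmon; intro v w h
    by_cases he : ∃ s, v s ≠ z
    · have himp : ∀ s, v s ≠ z → w s ≠ z := fun s hs hw =>
        hs (hle_z _ (by have := h s; rwa [hw] at this))
      have he' : ∃ s, w s ≠ z := ⟨he.choose, himp _ he.choose_spec⟩
      simp only [dif_pos he, dif_pos he']
      by_cases hu' : ∀ s t, w s ≠ z → w t ≠ z → s = t
      · have hu : ∀ s t, v s ≠ z → v t ≠ z → s = t :=
          fun s t hs ht => hu' s t (himp s hs) (himp t ht)
        rw [if_pos hu, if_pos hu']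
        have hch : he'.choose = he.choose := hu' _ _ he'.choose_spec (himp _ he.choose_spec)
        rw [hch]; exact h _
      · rw [if_neg hu']; exact ho _
    · simp only [dif_neg he]; exact hz _
  have hcomp := hD.2 (Fintype.card A) m
    (fun y : Fin (Fintype.card A) → A =>
      if h : ∃ s, y s ≠ z then
        (if ∀ s t, y s ≠ z → y t ≠ z → s = t then y h.choose else o)
      else z)
    (fun s => fun v : Fin m → A => if F v = eA s then eA s else z)
    hV (fun s => mem_M (eA s))
  have heq : (fun v : Fin m → A =>
      (fun y : Fin (Fintype.card A) → A =>
        if h : ∃ s, y s ≠ z then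
          (if ∀ s t, y s ≠ z → y t ≠ z → s = t then y h.choose else o)
        else z)
        (fun s => if F v = eA s then eA s else z)) = F := by
    funext v
    simp only
    by_cases hFz : F v = z
    · have hnall : ¬ ∃ s, (if F v = eA s then eA s else z) ≠ z := by
        push_neg
        intro s
        by_cases hs : F v = eA s
        · rw [if_pos hs, ← hs]; exact hFz
        · rw [if_neg hs]
      rw [dif_neg hnall, hFz]
    · have hex : ∃ s, (if F v = eA s then eA s else z) ≠ z := by
        refine ⟨eA.symm (F v), ?_⟩
        rw [if_pos (Equiv.apply_symm_apply eA (F v)).symm, Equiv.apply_symm_apply]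
        exact hFz
      have hkey : ∀ s, (if F v = eA s then eA s else z) ≠ z → F v = eA s := by
        intro s hs; by_contra hns; rw [if_neg hns] at hs; exact hs rfl
      have huni : ∀ s t, (if F v = eA s then eA s else z) ≠ z →
          (if F v = eA t then eA t else z) ≠ z → s = t := by
        intro s t hs ht
        exact eA.injective ((hkey s hs).symm.trans (hkey t ht))
      rw [dif_pos hex, if_pos huni]
      have hc := hex.choose_spec
      have h1 := hkey _ hc
      rw [if_pos h1, ← h1]
  rw [← heq]; exact hcomp

/-- `Pol` of a bounded partial order on a finite set with at least two elements
is a maximal clone. -/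
theorem bounded_partial_order_maximal {A : Type*} [Fintype A]
    (hA : 2 ≤ Fintype.card A) (ρ : Set (Fin 2 → A))
    (hρ : IsBoundedPartialOrder ρ) : IsMaximalClone (Pol ρ) := by
  classical
  obtain ⟨hrefl, hanti, htrans, ⟨z, hz⟩, ⟨o, ho⟩⟩ := hρ
  have hzo : z ≠ o := by
    intro h
    have hall : ∀ a b : A, a = b := by
      intro a b
      have ha : a = o := hanti a o (ho a) (by rw [← h]; exact hz a)
      have hb : b = o := hanti b o (ho b) (by rw [← h]; exact hz b)
      rw [ha, hb]
    have hc1 := Fintype.card_le_one_iff.mpr (fun a b => hall a b)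
    omega
  refine ⟨⟨fun n i => ?_, fun n k f g hf hg => ?_⟩, ?_, ?_⟩
  · intro r hr
    exact hr i
  · intro r hr
    exact hf (fun i => fun j => g i (fun l => r l j)) (fun i => hg i r hr)
  · intro hconn
    have hmem : (fun v : Fin 1 → A => if v 0 = z then o else z) ∈ Pol ρ 1 := by
      rw [hconn]; exact Set.mem_univ _
    have hres := hmem (fun _ => pair z o) (fun _ => hz o)
    have heq : (fun j : Fin 2 =>
        (fun v : Fin 1 → A => if v 0 = z then o else z) (fun _ => pair z o j)) = pair o z := by
      funext j
      fin_cases j <;> simp [pair, hzo, Ne.symm hzo]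
    rw [heq] at hres
    exact hzo (hanti z o (hz o) hres)
  · intro D hD hsub
    by_cases hDeq : D = Pol ρ
    · left; exact hDeq
    right
    have hex : ∃ n f, f ∈ D n ∧ f ∉ Pol ρ n := by
      by_contra hcon
      push_neg at hcon
      apply hDeq
      funext n
      exact Set.Subset.antisymm (fun f hf => hcon n f hf) (hsub n)
    obtain ⟨n, f, hfD, hfP⟩ := hex
    have hnp : ¬ Preserves f ρ := hfP
    simp only [Preserves] at hnp
    push_neg at hnp
    obtain ⟨r, hr, hout⟩ := hnp
    have hcd : pair (f fun i => r i 0) (f fun i => r i 1) ∉ ρ := by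
      intro hmem
      apply hout
      have he : (fun j : Fin 2 => f fun i => r i j)
          = pair (f fun i => r i 0) (f fun i => r i 1) := by
        funext j; fin_cases j <;> simp [pair]
      rw [he]; exact hmem
    -- monotone unary functions t ↦ (r i 0 or r i 1 according to whether t = o)
    have hUmem : ∀ i, (fun t : Fin 1 → A =>
        if pair o (t 0) ∈ ρ then r i 1 else r i 0) ∈ D 1 := by
      intro i
      refine hsub 1 (mono_mem_pol ρ _ fun v w h => ?_)
      by_cases hv : pair o (v 0) ∈ ρ
      · have hw : pair o (w 0) ∈ ρ := htrans _ _ _ hv (h 0)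
        rw [if_pos hv, if_pos hw]; exact hrefl _
      · rw [if_neg hv]
        by_cases hw : pair o (w 0) ∈ ρ
        · rw [if_pos hw]
          have h2 := hr i
          rw [← pair_eta (r i)] at h2
          exact h2
        · rw [if_neg hw]; exact hrefl _
    have hg0 : (fun t : Fin 1 → A =>
        f (fun i => if pair o (t 0) ∈ ρ then r i 1 else r i 0)) ∈ D 1 :=
      hD.2 n 1 f (fun i => fun t : Fin 1 → A => if pair o (t 0) ∈ ρ then r i 1 else r i 0)
        hfD hUmem
    have hφ : (fun t : Fin 1 → A =>
        if pair (f fun i => r i 0) (t 0) ∈ ρ then o else z) ∈ D 1 := by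
      refine hsub 1 (mono_mem_pol ρ _ fun v w h => ?_)
      by_cases hv : pair (f fun i => r i 0) (v 0) ∈ ρ
      · have hw : pair (f fun i => r i 0) (w 0) ∈ ρ := htrans _ _ _ hv (h 0)
        rw [if_pos hv, if_pos hw]; exact hrefl _
      · rw [if_neg hv]; exact hz _
    have hu1 : (fun t : Fin 1 → A =>
        if pair (f fun i => r i 0) (f fun i => if pair o (t 0) ∈ ρ then r i 1 else r i 0) ∈ ρ
        then o else z) ∈ D 1 :=
      hD.2 1 1 (fun t : Fin 1 → A => if pair (f fun i => r i 0) (t 0) ∈ ρ then o else z)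
        (fun _ => fun t : Fin 1 → A => f (fun i => if pair o (t 0) ∈ ρ then r i 1 else r i 0))
        hφ (fun _ => hg0)
    have hoz : pair o z ∉ ρ := fun h => hzo (hanti z o (hz o) h)
    have huz : (fun t : Fin 1 → A =>
        if pair (f fun i => r i 0) (f fun i => if pair o (t 0) ∈ ρ then r i 1 else r i 0) ∈ ρ
        then o else z) (fun _ => z) = o := by
      simp only [if_neg hoz]
      rw [if_pos (hrefl _)]
    have huo : (fun t : Fin 1 → A =>
        if pair (f fun i => r i 0) (f fun i => if pair o (t 0) ∈ ρ then r i 1 else r i 0) ∈ ρ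
        then o else z) (fun _ => o) = z := by
      simp only [if_pos (hrefl o)]
      rw [if_neg hcd]
    funext n'
    exact Set.eq_univ_of_forall fun F =>
      dense_step ρ z o hrefl hanti htrans hz ho hzo D hD hsub _ hu1 huz huo n' F
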